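/- Let A be a monounary algebra that is not residually finite, and B a monounary algebra that is not backwards-bounded. Then the direct product A × B is not residually finite. -/

import Mathlib

section Aux

lemma hom_iterate {A F : Type*} {f : A → A} {g : F → F} {φ : A → F}
    (h : ∀ a, φ (f a) = g (φ a)) (n : ℕ) (a : A) : φ (f^[n] a) = g^[n] (φ a) := by
  induction n generalizing a with
  | zero => rfl
  | succ n ih =>
    rw [Function.iterate_succ_apply, ih, h, ← Function.iterate_succ_apply,
      Function.iterate_succ_apply']

lemma periodic_of_preims {F : Type} [Finite F] (g : F → F) (u : F)
    (h : ∀ n, ∃ c, g^[n] c = u) : ∃ p, 0 < p ∧ g^[p] u = u := by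
  have : Fintype F := Fintype.ofFinite F
  set N := Fintype.card F with hN
  obtain ⟨c, hc⟩ := h N
  have hlt : Fintype.card F < Fintype.card (Fin (N + 1)) := by simp [hN]
  obtain ⟨i, j, hne, hij⟩ := Fintype.exists_ne_map_eq_of_card_lt
    (fun i : Fin (N + 1) => g^[(i : ℕ)] c) hlt
  wlog hlt2 : (i : ℕ) < (j : ℕ) generalizing i j
  · exact this j i hne.symm hij.symm (by omega)
  set p := (j : ℕ) - i with hp
  have hip : (i : ℕ) + p = j := by omega
  have hNi : (i : ℕ) ≤ N := by omega
  -- g^[N + p] c = g^[N] c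
  have key : g^[N + p] c = g^[N] c := by
    have : N + p = (N - i) + ((i : ℕ) + p) := by omega
    rw [this, Function.iterate_add_apply, hip, ← hij, ← Function.iterate_add_apply]
    congr 1; omega
  refine ⟨p, by omega, ?_⟩
  rw [← hc, ← Function.iterate_add_apply, Nat.add_comm, key]

lemma eq_of_preims {F : Type} [Finite F] (g : F → F) (u v : F)
    (hu : ∀ n, ∃ c, g^[n] c = u) (hv : ∀ n, ∃ c, g^[n] c = v)
    (huv : g u = g v) : u = v := by
  obtain ⟨p, hp, hpu⟩ := periodic_of_preims g u hu
  obtain ⟨q, hq, hqv⟩ := periodic_of_preims g v hv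
  have h1 : g^[p * q] u = u := by
    rw [Function.iterate_mul]; exact Function.iterate_fixed hpu q
  have h2 : g^[p * q] v = v := by
    rw [Nat.mul_comm, Function.iterate_mul]; exact Function.iterate_fixed hqv p
  have hpq : 1 ≤ p * q := Nat.one_le_iff_ne_zero.mpr (by positivity)
  calc u = g^[p * q] u := h1.symm
    _ = g^[p * q - 1] (g u) := by rw [← Function.iterate_succ_apply]; congr 1; omega
    _ = g^[p * q - 1] (g v) := by rw [huv]
    _ = g^[p * q] v := by rw [← Function.iterate_succ_apply]; congr 1; omega
    _ = v := h2

def IsMonoHom {A B : Type*} (f : A → A) (g : B → B) (φ : A → B) : Prop :=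
  ∀ a, φ (f a) = g (φ a)

def ResiduallyFinite {A : Type*} (f : A → A) : Prop :=
  ∀ x y : A, x ≠ y →
    ∃ (F : Type) (g : F → F) (φ : A → F),
      Finite F ∧ IsMonoHom f g φ ∧ φ x ≠ φ y

def preim {A : Type*} (f : A → A) (n : ℕ) (a : A) : Set A := {b | f^[n] b = a}

def BackwardsBounded {A : Type*} (f : A → A) : Prop :=
  ∀ a : A, ∃ n : ℕ, preim f n a = ∅



-- depth separating hom
lemma ldepth {A : Type*} (f : A → A) (u : A) (n : ℕ) (hn : preim f n u = ∅) :
    ∃ (g : Option (Fin n) → Option (Fin n)) (φ : A → Option (Fin n)),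
      IsMonoHom f g φ ∧ ∀ a b k, f^[k] a = u → f^[k] b ≠ u → φ a ≠ φ b := by
  classical
  have hmem : ∀ c, c ∈ preim f n u ↔ f^[n] c = u := fun c => Iff.rfl
  have hbound : ∀ a r, f^[r] a = u → r < n := by
    intro a r hr
    by_contra hge
    push_neg at hge
    have : f^[n] (f^[r - n] a) = u := by
      rw [← Function.iterate_add_apply]
      rwa [show n + (r - n) = r by omega]
    have : f^[r - n] a ∈ preim f n u := this
    rw [hn] at this; exact this
  have hnocycle : ∀ c, 0 < c → f^[c] u ≠ u := by
    intro c hc hcu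
    have hall : ∀ d, ∃ e, f^[d] e = u := by
      intro d
      refine ⟨f^[c * (d + 1) - d] u, ?_⟩
      rw [← Function.iterate_add_apply]
      have hd1 : d + 1 ≤ c * (d + 1) := Nat.le_mul_of_pos_left _ hc
      rw [show d + (c * (d + 1) - d) = c * (d + 1) by omega]
      rw [Function.iterate_mul]
      exact Function.iterate_fixed hcu (d + 1)
    obtain ⟨e, he⟩ := hall n
    have : e ∈ preim f n u := he
    rw [hn] at this; exact this
  have huniq : ∀ a r s, f^[r] a = u → f^[s] a = u → r = s := by
    intro a r s hr hs
    by_contra hne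
    rcases Nat.lt_or_ge r s with h | h
    · refine hnocycle (s - r) (by omega) ?_
      calc f^[s - r] u = f^[s] a := by
            rw [← hr, ← Function.iterate_add_apply]; congr 1; omega
        _ = u := hs
    · refine hnocycle (r - s) (by omega) ?_
      calc f^[r - s] u = f^[r] a := by
            rw [← hs, ← Function.iterate_add_apply]; congr 1; omega
        _ = u := hr
  set P : A → Prop := fun a => ∃ r, f^[r] a = u with hP
  set φ : A → Option (Fin n) := fun a =>
    if h : P a then some ⟨h.choose, hbound a h.choose h.choose_spec⟩ else none with hφ
  have hφ_some : ∀ a r (hr : f^[r] a = u), φ a = some ⟨r, hbound a r hr⟩ := by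
    intro a r hr
    have hPa : P a := ⟨r, hr⟩
    simp only [hφ, dif_pos hPa]
    congr 1
    exact Fin.ext (huniq a _ r hPa.choose_spec hr)
  have hφ_none : ∀ a, ¬ P a → φ a = none := by
    intro a ha; simp only [hφ, dif_neg ha]
  set g : Option (Fin n) → Option (Fin n) := fun o =>
    o.bind (fun r => if h : 0 < (r : ℕ) then some ⟨(r : ℕ) - 1, by omega⟩ else none) with hg
  refine ⟨g, φ, ?_, ?_⟩
  · intro a
    by_cases hPa : P a
    · obtain ⟨r, hr⟩ := hPa
      rcases Nat.eq_zero_or_pos r with hr0 | hrpos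
      · subst hr0
        have hau : a = u := hr
        have : ¬ P (f a) := by
          rintro ⟨s, hs⟩
          have : f^[s + 1] a = u := by
            rw [Function.iterate_succ_apply]; exact hs
          have := huniq a (s + 1) 0 this hr
          omega
        rw [hφ_none _ this, hφ_some a 0 hr]
        simp [hg]
      · have hfa : f^[r - 1] (f a) = u := by
          rw [show r = r - 1 + 1 by omega, Function.iterate_succ_apply] at hr; exact hr
        rw [hφ_some (f a) (r - 1) hfa, hφ_some a r hr]
        simp [hg, hrpos]
    · have hPfa : ¬ P (f a) := by
        rintro ⟨s, hs⟩
        exact hPa ⟨s + 1, by rw [Function.iterate_succ_apply]; exact hs⟩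
      rw [hφ_none _ hPa, hφ_none _ hPfa]
      simp [hg]
  · intro a b k hak hbk hab
    rw [hφ_some a k hak] at hab
    by_cases hPb : P b
    · obtain ⟨s, hs⟩ := hPb
      rw [hφ_some b s hs] at hab
      have : k = s := by simpa using congrArg (fun o => o.map Fin.val) hab
      exact hbk (this ▸ hs)
    · rw [hφ_none _ hPb] at hab
      simp at hab



-- component separating hom
lemma lcomp {A : Type*} (f : A → A) (x y : A) (h : ¬ ∃ i j, f^[i] x = f^[j] y) :
    ∃ (g : Bool → Bool) (φ : A → Bool), IsMonoHom f g φ ∧ φ x ≠ φ y := by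
  classical
  set P : A → Prop := fun a => ∃ i j, f^[i] a = f^[j] y with hP
  refine ⟨id, fun a => if P a then true else false, ?_, ?_⟩
  · intro a
    have : P (f a) ↔ P a := by
      constructor
      · rintro ⟨i, j, hij⟩
        exact ⟨i + 1, j, by rwa [Function.iterate_succ_apply]⟩
      · rintro ⟨i, j, hij⟩
        refine ⟨i, j + 1, ?_⟩
        rw [Function.iterate_succ_apply', ← hij]
        exact (Function.iterate_succ_apply f i a).symm.trans
          (Function.iterate_succ_apply' f i a)
    simp only [id]
    by_cases hPa : P a
    · rw [if_pos hPa, if_pos (this.mpr hPa)]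
    · rw [if_neg hPa, if_neg (fun hh => hPa (this.mp hh))]
  · have hPy : P y := ⟨0, 0, rfl⟩
    simp only [if_neg (show ¬ P x from h), if_pos hPy]
    exact Bool.false_ne_true

-- phase separating hom
lemma lphase {A : Type*} (f : A → A) (x y : A) (m i j : ℕ) (hm : 0 < m)
    (K : ∀ s t, f^[s] x = f^[t] x → s ≡ t [MOD m])
    (hij : ¬ i ≡ j [MOD m]) (hxy : f^[i] x = f^[j] y) :
    ∃ (g : Option (ZMod m) → Option (ZMod m)) (φ : A → Option (ZMod m)),
      IsMonoHom f g φ ∧ φ x ≠ φ y := by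
  classical
  haveI : NeZero m := ⟨by omega⟩
  set P : A → Prop := fun a => ∃ p q, f^[p] a = f^[q] x with hP
  have WD : ∀ a p q p' q', f^[p] a = f^[q] x → f^[p'] a = f^[q'] x →
      ((q : ZMod m) - p) = ((q' : ZMod m) - p') := by
    intro a p q p' q' h1 h2
    have key : f^[p' + q] x = f^[p + q'] x := by
      calc f^[p' + q] x = f^[p'] (f^[q] x) := by rw [Function.iterate_add_apply]
        _ = f^[p'] (f^[p] a) := by rw [h1]
        _ = f^[p] (f^[p'] a) := by
            rw [← Function.iterate_add_apply, Nat.add_comm, Function.iterate_add_apply]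
        _ = f^[p] (f^[q'] x) := by rw [h2]
        _ = f^[p + q'] x := by rw [Function.iterate_add_apply]
    have hmod := K _ _ key
    have : ((p' + q : ℕ) : ZMod m) = ((p + q' : ℕ) : ZMod m) :=
      (ZMod.natCast_eq_natCast_iff _ _ _).mpr hmod
    push_cast at this
    linear_combination this
  set φ : A → Option (ZMod m) := fun a =>
    if h : P a then some ((h.choose_spec.choose : ZMod m) - h.choose) else none with hφ
  have hφ_some : ∀ a p q, f^[p] a = f^[q] x → φ a = some ((q : ZMod m) - p) := by
    intro a p q hpq
    have hPa : P a := ⟨p, q, hpq⟩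
    simp only [hφ, dif_pos hPa]
    congr 1
    exact WD a _ _ p q hPa.choose_spec.choose_spec hpq
  have hφ_none : ∀ a, ¬ P a → φ a = none := fun a ha => by simp only [hφ, dif_neg ha]
  refine ⟨Option.map (· + 1), φ, ?_, ?_⟩
  · intro a
    by_cases hPa : P a
    · obtain ⟨p, q, hpq⟩ := hPa
      have h2 : f^[p] (f a) = f^[q + 1] x := by
        rw [← Function.iterate_succ_apply, Function.iterate_succ_apply',
          Function.iterate_succ_apply', hpq]
      rw [hφ_some (f a) p (q + 1) h2, hφ_some a p q hpq]
      simp only [Option.map_some]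
      congr 1
      push_cast
      ring
    · have hPfa : ¬ P (f a) := by
        rintro ⟨p, q, hpq⟩
        exact hPa ⟨p + 1, q, by rwa [Function.iterate_succ_apply]⟩
      rw [hφ_none _ hPa, hφ_none _ hPfa]
      rfl
  · rw [hφ_some x 0 0 rfl, hφ_some y j i hxy.symm]
    intro hc
    simp only [Option.some.injEq] at hc
    apply hij
    have : (i : ZMod m) = (j : ZMod m) := by linear_combination -hc
    exact (ZMod.natCast_eq_natCast_iff _ _ _).mp this






lemma periodFrom {A : Type*} (f : A → A) (x : A) (s L : ℕ)
    (h : f^[s + L] x = f^[s] x) : ∀ n, s ≤ n → f^[n + L] x = f^[n] x := by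
  intro n hn
  calc f^[n + L] x = f^[n - s] (f^[s + L] x) := by
        rw [← Function.iterate_add_apply]; congr 1; omega
    _ = f^[n - s] (f^[s] x) := by rw [h]
    _ = f^[n] x := by rw [← Function.iterate_add_apply]; congr 1; omega

lemma periodMul {A : Type*} (f : A → A) (x : A) (s L : ℕ)
    (h : f^[s + L] x = f^[s] x) : ∀ q n, s ≤ n → f^[n + q * L] x = f^[n] x := by
  intro q
  induction q with
  | zero => simp
  | succ q ih =>
    intro n hn
    calc f^[n + (q + 1) * L] x = f^[(n + q * L) + L] x := by congr 1; ring
      _ = f^[n + q * L] x := periodFrom f x s L h _ (by omega)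
      _ = f^[n] x := ih n hn

lemma hard {A : Type*} (f : A → A) (x y : A) (hxy : x ≠ y)
    (hsep : ∀ (F : Type) (g : F → F) (φ : A → F),
      Finite F → IsMonoHom f g φ → φ x = φ y) :
    ∃ u v : A, u ≠ v ∧ f u = f v ∧
      (∀ n, (preim f n u).Nonempty) ∧ (∀ n, (preim f n v).Nonempty) := by
  classical
  -- Step 1: there is k with f^[k] x = f^[k] y
  have hk : ∃ k, f^[k] x = f^[k] y := by
    by_contra hne
    push_neg at hne
    by_cases hcomp : ∃ i j, f^[i] x = f^[j] y
    · obtain ⟨i, j, hij⟩ := hcomp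
      have hij_ne : i ≠ j := fun h => hne i (h ▸ hij)
      by_cases hcyc : ∃ L, 0 < L ∧ ∃ s, f^[s + L] x = f^[s] x
      · -- cyclic component: minimal period ρ
        set ρ := Nat.find hcyc with hρdef
        obtain ⟨hρpos, s₀, hs₀⟩ := Nat.find_spec hcyc
        have K : ∀ s t, f^[s] x = f^[t] x → s ≡ t [MOD ρ] := by
          have main : ∀ s t, s ≤ t → f^[s] x = f^[t] x → s ≡ t [MOD ρ] := by
            intro s t hst hfeq
            rcases Nat.eq_or_lt_of_le hst with heq | hlt
            · rw [heq]
            · have hper : f^[s + (t - s)] x = f^[s] x := by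
                rw [show s + (t - s) = t by omega]; exact hfeq.symm
              obtain ⟨q, d, hPeq, hdρ⟩ : ∃ q d, t - s = q * ρ + d ∧ d < ρ :=
                ⟨(t - s) / ρ, (t - s) % ρ,
                  by rw [Nat.mul_comm]; exact (Nat.div_add_mod _ _).symm,
                  Nat.mod_lt _ hρpos⟩
              have hd0 : d = 0 := by
                by_contra hd0
                have hdpos : 0 < d := Nat.pos_of_ne_zero hd0
                have hMd : f^[(max s s₀) + d] x = f^[max s s₀] x := by
                  have h1 : f^[((max s s₀) + d) + q * ρ] x = f^[(max s s₀) + d] x :=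
                    periodMul f x s₀ ρ hs₀ q _ (by omega)
                  have h2 : f^[(max s s₀) + (t - s)] x = f^[max s s₀] x :=
                    periodFrom f x s (t - s) hper _ (by omega)
                  have heq : ((max s s₀) + d) + q * ρ = (max s s₀) + (t - s) := by omega
                  rw [heq, h2] at h1
                  exact h1.symm
                exact Nat.find_min hcyc hdρ ⟨hdpos, max s s₀, hMd⟩
              have : ρ ∣ t - s := ⟨q, by rw [Nat.mul_comm]; omega⟩
              exact (Nat.modEq_iff_dvd' hst).mpr this
          intro s t hfeq
          rcases Nat.le_total s t with h | h
          · exact main s t h hfeq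
          · exact (main t s h hfeq.symm).symm
        by_cases hmod : i ≡ j [MOD ρ]
        · -- derive equal-exponent merge, contradiction with hne
          rcases Nat.le_total j i with hji | hij'
          · have hdvd : ρ ∣ i - j := (Nat.modEq_iff_dvd' hji).mp hmod.symm
            obtain ⟨t, ht⟩ := hdvd
            rw [Nat.mul_comm] at ht
            apply hne (j + s₀)
            calc f^[j + s₀] x = f^[(j + s₀) + t * ρ] x :=
                  (periodMul f x s₀ ρ hs₀ t _ (by omega)).symm
              _ = f^[s₀ + i] x := by congr 1; omega
              _ = f^[s₀] (f^[i] x) := Function.iterate_add_apply f s₀ i x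
              _ = f^[s₀] (f^[j] y) := by rw [hij]
              _ = f^[j + s₀] y := by
                  rw [← Function.iterate_add_apply, Nat.add_comm]
          · have hdvd : ρ ∣ j - i := (Nat.modEq_iff_dvd' hij').mp hmod
            obtain ⟨t, ht⟩ := hdvd
            rw [Nat.mul_comm] at ht
            apply hne (j + s₀)
            calc f^[j + s₀] x = f^[(i + s₀) + t * ρ] x := by congr 1; omega
              _ = f^[i + s₀] x := periodMul f x s₀ ρ hs₀ t _ (by omega)
              _ = f^[s₀] (f^[i] x) := by rw [Nat.add_comm]; exact Function.iterate_add_apply f s₀ i x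
              _ = f^[s₀] (f^[j] y) := by rw [hij]
              _ = f^[j + s₀] y := by
                  rw [← Function.iterate_add_apply, Nat.add_comm]
        · obtain ⟨g, φ, hhom, hneq⟩ := lphase f x y ρ i j hρpos K hmod hij
          haveI : NeZero ρ := ⟨by omega⟩
          exact hneq (hsep _ g φ inferInstance hhom)
      · -- acyclic: exponents are unique
        push_neg at hcyc
        set m := i + j + 1 with hm
        have K : ∀ s t, f^[s] x = f^[t] x → s ≡ t [MOD m] := by
          intro s t hfeq
          have : s = t := by
            by_contra hst
            rcases Nat.lt_or_ge s t with h | h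
            · exact absurd hfeq.symm (by
                have := hcyc (t - s) (by omega)
                intro hcon
                exact this s (by rw [show s + (t - s) = t by omega]; exact hcon))
            · have h' : t < s := by omega
              exact absurd hfeq (by
                have := hcyc (s - t) (by omega)
                intro hcon
                exact this t (by rw [show t + (s - t) = s by omega]; exact hcon))
          rw [this]
        have hijm : ¬ i ≡ j [MOD m] := by
          intro hcon
          have := Nat.ModEq.eq_of_lt_of_lt hcon (by omega) (by omega)
          exact hij_ne this
        obtain ⟨g, φ, hhom, hneq⟩ := lphase f x y m i j (by omega) K hijm hij
        haveI : NeZero m := ⟨by omega⟩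
        exact hneq (hsep _ g φ inferInstance hhom)
    · obtain ⟨g, φ, hhom, hneq⟩ := lcomp f x y hcomp
      exact hneq (hsep _ g φ inferInstance hhom)
  -- Step 2: minimal k, define u v
  set k := Nat.find hk with hkdef
  have hkspec : f^[k] x = f^[k] y := Nat.find_spec hk
  have hkpos : 0 < k := by
    rcases Nat.eq_zero_or_pos k with h | h
    · exact absurd (by simpa [h] using hkspec) hxy
    · exact h
  set u := f^[k - 1] x with hu
  set v := f^[k - 1] y with hv
  have huv : u ≠ v := fun h => Nat.find_min hk (m := k - 1) (by omega) h
  have hfuv : f u = f v := by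
    have h := hkspec
    rw [show k = (k - 1) + 1 by omega, Function.iterate_succ_apply',
      Function.iterate_succ_apply'] at h
    rw [hu, hv]
    exact h
  refine ⟨u, v, huv, hfuv, ?_, ?_⟩
  · intro n
    by_contra hne
    rw [Set.not_nonempty_iff_eq_empty] at hne
    obtain ⟨g, φ, hhom, hsep'⟩ := ldepth f u n hne
    exact hsep' x y (k - 1) rfl (fun h => huv h.symm) (hsep _ g φ inferInstance hhom)
  · intro n
    by_contra hne
    rw [Set.not_nonempty_iff_eq_empty] at hne
    obtain ⟨g, φ, hhom, hsep'⟩ := ldepth f v n hne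
    exact hsep' y x (k - 1) rfl (fun h => huv h) ((hsep _ g φ inferInstance hhom).symm)

end Aux

lemma prod_iterate {A B : Type*} (f₁ : A → A) (f₂ : B → B) (n : ℕ) (p : A × B) :
    (fun p : A × B => (f₁ p.1, f₂ p.2))^[n] p = (f₁^[n] p.1, f₂^[n] p.2) := by
  induction n generalizing p with
  | zero => rfl
  | succ n ih =>
    rw [Function.iterate_succ_apply, ih]
    simp [Function.iterate_succ_apply]

theorem product_not_residually_finite {A B : Type*} (f₁ : A → A) (f₂ : B → B)
    (hA : ¬ ResiduallyFinite f₁) (hB : ¬ BackwardsBounded f₂) :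
    ¬ ResiduallyFinite (fun p : A × B => (f₁ p.1, f₂ p.2)) := by
  intro hRF
  -- get b in B with all preimage sets nonempty
  rw [BackwardsBounded] at hB
  push_neg at hB
  obtain ⟨b, hb⟩ := hB
  have hbne : ∀ n, ∃ c, f₂^[n] c = b := by
    intro n
    obtain ⟨c, hc⟩ := hb n
    exact ⟨c, hc⟩
  -- get inseparable pair in A
  rw [ResiduallyFinite] at hA
  push_neg at hA
  obtain ⟨x, y, hxy, hsepA⟩ := hA
  have hsep : ∀ (F : Type) (g : F → F) (φ : A → F),
      Finite F → IsMonoHom f₁ g φ → φ x = φ y := by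
    intro F g φ hF hhom
    by_contra hne
    exact hne (hsepA F g φ hF hhom)
  obtain ⟨u, v, huv, hfuv, hu, hv⟩ := hard f₁ x y hxy hsep
  -- apply RF of product to (u,b), (v,b)
  have hne : (u, b) ≠ (v, b) := by
    intro h
    exact huv (congrArg Prod.fst h)
  obtain ⟨F, g, φ, hF, hhom, hneq⟩ := hRF (u, b) (v, b) hne
  apply hneq
  have hgu : ∀ (w : A) (hw : ∀ n, (preim f₁ n w).Nonempty) (n : ℕ),
      ∃ t, g^[n] t = φ (w, b) := by
    intro w hw n
    obtain ⟨c, hc⟩ := hw n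
    obtain ⟨c', hc'⟩ := hbne n
    refine ⟨φ (c, c'), ?_⟩
    rw [← hom_iterate hhom n (c, c'), prod_iterate]
    have hc2 : f₁^[n] c = w := hc
    rw [hc2, hc']
  have hgeq : g (φ (u, b)) = g (φ (v, b)) := by
    rw [← hhom (u, b), ← hhom (v, b)]
    show φ (f₁ u, f₂ b) = φ (f₁ v, f₂ b)
    rw [hfuv]
  exact eq_of_preims g _ _ (hgu u hu) (hgu v hv) hgeq
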